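/- In any monoid containing elements s_1, …, s_{n−1} satisfying the braid relations, for every s-shuffle π ∈ Sh_r^s (with r < n) one has [π] ν_r^{1,n} = ν_r^{1,n} [π]_{(n−r)}. -/

import Mathlib

namespace BraidMonoid

variable {M : Type*} [Monoid M]

/-- `br g a b` is the element `[a;b]` of the paper: for `a ≤ b` it is the descending
product `g (b-1) * g (b-2) * ⋯ * g a`, for `b < a` it is the ascending product
`g b * g (b+1) * ⋯ * g (a-1)`, and `br g a a = 1`. -/
def br (g : ℕ → M) (a b : ℕ) : M :=
  if a ≤ b then (((List.range (b - a)).map (fun j => g (a + j))).reverse).prod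
  else ((List.range (a - b)).map (fun j => g (b + j))).prod

/-- `nu g r K N` is `ν_r^{K,N} = [K;r+1][K+1;r+2]⋯[K+N-r-1;N]`. -/
def nu (g : ℕ → M) (r K N : ℕ) : M :=
  ((List.range (N - r)).map (fun j => br g (K + j) (r + 1 + j))).prod

/-- The braid relations for the elements `g 1, …, g (n-1)`. -/
def BraidRels (g : ℕ → M) (n : ℕ) : Prop :=
  (∀ i, 1 ≤ i → i + 1 ≤ n - 1 → g i * g (i + 1) * g i = g (i + 1) * g i * g (i + 1)) ∧
  (∀ i j, 1 ≤ i → j ≤ n - 1 → i + 1 < j → g i * g j = g j * g i)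

/-- `π` is an `r`-shuffle: it is strictly increasing on the first `r` positions and on
the remaining positions (0-indexed). -/
def IsShuffle (n r : ℕ) (π : Equiv.Perm (Fin n)) : Prop :=
  (∀ i j : Fin n, i < j → (j : ℕ) < r → π i < π j) ∧
  (∀ i j : Fin n, i < j → r ≤ (i : ℕ) → π i < π j)

/-- `[π]_{(t)} = [t+1; t+π(1)] [t+2; t+π(2)] ⋯ [t+r; t+π(r)]` (1-indexed; here `π` is
0-indexed, so position `i` contributes `[t+i+1; t+π(i)+1]`). -/
def brShuffleShift (g : ℕ → M) (t N r : ℕ) (π : Equiv.Perm (Fin N)) : M :=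
  (((List.finRange N).take r).map (fun (i : Fin N) => br g (t + (i : ℕ) + 1) (t + (π i : ℕ) + 1))).prod

/-- `[π] = [1;π(1)][2;π(2)]⋯[r;π(r)]`. -/
def brShuffle (g : ℕ → M) (N r : ℕ) (π : Equiv.Perm (Fin N)) : M :=
  brShuffleShift g 0 N r π

end BraidMonoid

section Stmt4Aux

open BraidMonoid

variable {M : Type*} [Monoid M]

private lemma br_refl (g : ℕ → M) (a : ℕ) : br g a a = 1 := by simp [br]

private lemma br_succ_left (g : ℕ → M) (a b : ℕ) (h : a ≤ b) :
    br g a (b + 1) = g b * br g a b := by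
  simp only [br, if_pos h, if_pos (h.trans (Nat.le_succ b))]
  rw [Nat.succ_sub h, List.range_succ]
  simp [Nat.add_sub_cancel' h]

private lemma comm_br (g : ℕ → M) {n : ℕ} (hg : BraidRels g n) :
    ∀ (d a m : ℕ), 1 ≤ a → a + d < m → m ≤ n - 1 →
      g m * br g a (a + d) = br g a (a + d) * g m := by
  intro d
  induction d with
  | zero => intro a m _ _ _; simp [br_refl]
  | succ d ih =>
    intro a m ha hd hm
    rw [show a + (d + 1) = (a + d) + 1 from rfl,
      br_succ_left g a (a + d) (Nat.le_add_right a d)]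
    have hc : g (a + d) * g m = g m * g (a + d) := hg.2 (a + d) m (by omega) hm (by omega)
    calc g m * (g (a + d) * br g a (a + d))
        = (g (a + d) * g m) * br g a (a + d) := by rw [hc, mul_assoc]
      _ = g (a + d) * (g m * br g a (a + d)) := by rw [mul_assoc]
      _ = g (a + d) * (br g a (a + d) * g m) := by rw [ih a m ha (by omega) hm]
      _ = (g (a + d) * br g a (a + d)) * g m := by rw [mul_assoc]

private lemma desc_swap (g : ℕ → M) {n : ℕ} (hg : BraidRels g n) :
    ∀ (b a k : ℕ), 1 ≤ a → a ≤ k → k + 1 ≤ b → b ≤ n - 1 →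
      g k * br g a (b + 1) = br g a (b + 1) * g (k + 1) := by
  intro b
  induction b with
  | zero => intro a k _ _ h _; omega
  | succ b ih =>
    intro a k ha hak hk hb
    rw [br_succ_left g a (b + 1) (by omega)]
    rcases eq_or_lt_of_le hk with heq | hlt
    · -- k = b
      have hkb : k = b := by omega
      subst hkb
      rw [br_succ_left g a k (by omega)]
      have hbr : g (k + 1) * br g a k = br g a k * g (k + 1) := by
        have := comm_br g hg (k - a) a (k + 1) ha (by omega) (by omega)
        rwa [Nat.add_sub_cancel' hak] at this
      have hb3 : g k * g (k + 1) * g k = g (k + 1) * g k * g (k + 1) :=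
        hg.1 k (by omega) (by omega)
      calc g k * (g (k + 1) * (g k * br g a k))
          = (g k * g (k + 1) * g k) * br g a k := by simp [mul_assoc]
        _ = (g (k + 1) * g k * g (k + 1)) * br g a k := by rw [hb3]
        _ = g (k + 1) * (g k * (g (k + 1) * br g a k)) := by simp [mul_assoc]
        _ = g (k + 1) * (g k * (br g a k * g (k + 1))) := by rw [hbr]
        _ = (g (k + 1) * (g k * br g a k)) * g (k + 1) := by simp [mul_assoc]
    · -- k + 1 < b + 1
      have hcomm : g k * g (b + 1) = g (b + 1) * g k :=
        hg.2 k (b + 1) (by omega) hb (by omega)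
      calc g k * (g (b + 1) * br g a (b + 1))
          = (g k * g (b + 1)) * br g a (b + 1) := by rw [mul_assoc]
        _ = g (b + 1) * (g k * br g a (b + 1)) := by rw [hcomm, mul_assoc]
        _ = g (b + 1) * (br g a (b + 1) * g (k + 1)) := by
              rw [ih a k ha hak (by omega) (by omega)]
        _ = (g (b + 1) * br g a (b + 1)) * g (k + 1) := by rw [mul_assoc]

private def Tprod (g : ℕ → M) (r j m : ℕ) : M :=
  ((List.range m).map (fun i => br g (1 + j + i) (r + 1 + j + i))).prod

private lemma Tprod_succ (g : ℕ → M) (r j m : ℕ) :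
    Tprod g r j (m + 1) = br g (1 + j) (r + 1 + j) * Tprod g r (j + 1) m := by
  unfold Tprod
  rw [List.range_succ_eq_map]
  simp only [List.map_cons, List.prod_cons, List.map_map]
  congr 1
  refine congrArg List.prod (List.map_congr_left ?_)
  intro i _
  simp only [Function.comp_apply]
  congr 1 <;> omega

private lemma T_swap (g : ℕ → M) {n : ℕ} (hg : BraidRels g n) (r : ℕ) :
    ∀ (m j k : ℕ), 1 ≤ k → k + 1 ≤ r → r + j + m ≤ n →
      g (k + j) * Tprod g r j m = Tprod g r j m * g (k + j + m) := by
  intro m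
  induction m with
  | zero => intro j k _ _ _; simp [Tprod]
  | succ m ih =>
    intro j k hk hkr hn
    rw [Tprod_succ]
    have h1 : g (k + j) * br g (1 + j) (r + 1 + j) = br g (1 + j) (r + 1 + j) * g (k + j + 1) := by
      have := desc_swap g hg (r + j) (1 + j) (k + j) (by omega) (by omega) (by omega) (by omega)
      rwa [show r + j + 1 = r + 1 + j from by omega] at this
    have h2 : g (k + j + 1) * Tprod g r (j + 1) m =
        Tprod g r (j + 1) m * g (k + j + 1 + m) := ih (j + 1) k hk hkr (by omega)
    calc g (k + j) * (br g (1 + j) (r + 1 + j) * Tprod g r (j + 1) m)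
        = (g (k + j) * br g (1 + j) (r + 1 + j)) * Tprod g r (j + 1) m := by rw [mul_assoc]
      _ = br g (1 + j) (r + 1 + j) * (g (k + j + 1) * Tprod g r (j + 1) m) := by
            rw [h1, mul_assoc]
      _ = br g (1 + j) (r + 1 + j) * (Tprod g r (j + 1) m * g (k + j + 1 + m)) := by rw [h2]
      _ = (br g (1 + j) (r + 1 + j) * Tprod g r (j + 1) m) * g (k + j + (m + 1)) := by
            rw [← mul_assoc, show k + j + 1 + m = k + j + (m + 1) from by omega]

private lemma T_eq_nu (g : ℕ → M) (r n : ℕ) : Tprod g r 0 (n - r) = nu g r 1 n := by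
  rfl

private lemma list_swap (g : ℕ → M) {n : ℕ} (hg : BraidRels g n) (r : ℕ) (hr : r < n) :
    ∀ l : List ℕ, (∀ x ∈ l, 1 ≤ x ∧ x + 1 ≤ r) →
      (l.map g).prod * nu g r 1 n = nu g r 1 n * (l.map (fun x => g (x + (n - r)))).prod := by
  intro l
  induction l with
  | nil => simp
  | cons x l ih =>
    intro h
    have hx := h x List.mem_cons_self
    have hgen : g x * nu g r 1 n = nu g r 1 n * g (x + (n - r)) := by
      have := T_swap g hg r (n - r) 0 x hx.1 hx.2 (by omega)
      rwa [T_eq_nu] at this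
    simp only [List.map_cons, List.prod_cons, mul_assoc]
    rw [ih (fun y hy => h y (List.mem_cons_of_mem x hy)), ← mul_assoc, hgen, mul_assoc]

private def brList (a b : ℕ) : List ℕ :=
  if a ≤ b then ((List.range (b - a)).map (fun j => a + j)).reverse
  else (List.range (a - b)).map (fun j => b + j)

private lemma br_eq_prod (g : ℕ → M) (a b : ℕ) :
    br g a b = ((brList a b).map g).prod := by
  unfold br brList
  split <;> simp [List.map_reverse, List.map_map, Function.comp_def]

private lemma br_shift (g : ℕ → M) (t a b : ℕ) :
    br g (t + a) (t + b) = ((brList a b).map (fun x => g (x + t))).prod := by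
  unfold br brList
  have e1 : ∀ c : ℕ, (fun j => g (t + c + j)) = fun j => g (c + j + t) := by
    intro c; funext j; congr 1; omega
  rcases le_or_gt a b with h | h
  · rw [if_pos h, if_pos (Nat.add_le_add_left h t), Nat.add_sub_add_left, e1]
    simp [List.map_reverse, List.map_map, Function.comp_def]
  · rw [if_neg (by omega), if_neg (by omega), Nat.add_sub_add_left, e1]
    simp [List.map_map, Function.comp_def]

private lemma mem_brList {a b x : ℕ} (hx : x ∈ brList a b) :
    (a ≤ x ∧ x < b) ∨ (b ≤ x ∧ x < a) := by
  unfold brList at hx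
  split at hx <;>
    simp only [List.mem_reverse, List.mem_map, List.mem_range] at hx <;>
    obtain ⟨j, hj, rfl⟩ := hx <;> omega

private lemma br_swap (g : ℕ → M) {n : ℕ} (hg : BraidRels g n) (r : ℕ) (hr : r < n)
    (a b : ℕ) (ha : 1 ≤ a) (hb : 1 ≤ b) (har : a ≤ r) (hbr : b ≤ r) :
    br g a b * nu g r 1 n = nu g r 1 n * br g ((n - r) + a) ((n - r) + b) := by
  rw [br_eq_prod, br_shift]
  exact list_swap g hg r hr (brList a b) (fun x hx => by have := mem_brList hx; omega)

private lemma shuffle_swap (g : ℕ → M) {n : ℕ} (hg : BraidRels g n) (r : ℕ) (hr : r < n)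
    (π : Equiv.Perm (Fin r)) :
    ∀ l : List (Fin r),
      (l.map (fun i : Fin r => br g ((i : ℕ) + 1) ((π i : ℕ) + 1))).prod * nu g r 1 n =
      nu g r 1 n *
        (l.map (fun i : Fin r => br g ((n - r) + (i : ℕ) + 1) ((n - r) + (π i : ℕ) + 1))).prod := by
  intro l
  induction l with
  | nil => simp
  | cons i l ih =>
    simp only [List.map_cons, List.prod_cons, mul_assoc]
    rw [ih, ← mul_assoc]
    have hb := br_swap g hg r hr ((i : ℕ) + 1) ((π i : ℕ) + 1)
      (by omega) (by omega) (by have := i.isLt; omega) (by have := (π i).isLt; omega)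
    rw [← Nat.add_assoc, ← Nat.add_assoc] at hb
    rw [hb, mul_assoc]

end Stmt4Aux

open BraidMonoid in
/-- Lemma 2.1: in a monoid whose elements `g 1, …, g (n-1)` satisfy the braid
relations, for every `s`-shuffle `π ∈ Sh_r^s` with `r < n` one has
`[π] ν_r^{1,n} = ν_r^{1,n} [π]_{(n-r)}`. -/
theorem stmt4 {M : Type*} [Monoid M] (n : ℕ) (g : ℕ → M) (hg : BraidRels g n)
    (r s : ℕ) (hs : s ≤ r) (hr : r < n) (π : Equiv.Perm (Fin r)) (hπ : IsShuffle r s π) :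
    brShuffle g r s π * nu g r 1 n = nu g r 1 n * brShuffleShift g (n - r) r s π := by
  have h1 : brShuffle g r s π =
      (((List.finRange r).take s).map
        (fun i : Fin r => br g ((i : ℕ) + 1) ((π i : ℕ) + 1))).prod := by
    simp [brShuffle, brShuffleShift]
  have h2 : brShuffleShift g (n - r) r s π =
      (((List.finRange r).take s).map
        (fun i : Fin r => br g ((n - r) + (i : ℕ) + 1) ((n - r) + (π i : ℕ) + 1))).prod := rfl
  rw [h1, h2]
  exact shuffle_swap g hg r hr π _
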